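/- With the rank-one dressing data below, σ₂·Bᵀ·σ₂ = ((k²−conj(k)²)/(2k))·E(k), where Bᵀ is the transpose of B. -/

import Mathlib

set_option maxHeartbeats 1000000


open Matrix Complex ComplexConjugate

noncomputable section

abbrev M2 := Matrix (Fin 2) (Fin 2) ℂ
abbrev Vec2 := Matrix (Fin 2) (Fin 1) ℂ

def sigma3 : M2 := !![1, 0; 0, -1]
def sigma2 : M2 := !![0, -Complex.I; Complex.I, 0]

/-- α = (k|y₁|² + k̄|y₂|²)⁻¹ -/
def alph (k : ℂ) (y : Vec2) : ℂ :=
  (k * (Complex.normSq (y 0 0) : ℂ) + conj k * (Complex.normSq (y 1 0) : ℂ))⁻¹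

/-- z = ((k²−k̄²)/2)·diag(α,ᾱ)·y -/
def zvec (k : ℂ) (y : Vec2) : Vec2 :=
  ((k ^ 2 - (conj k) ^ 2) / 2) • (!![alph k y, 0; 0, conj (alph k y)] * y)

/-- B = |z⟩⟨y| -/
def Bmat (k : ℂ) (y : Vec2) : M2 := zvec k y * yᴴ

/-- D(λ) = I + B/(λ−k) − σ₃Bσ₃/(λ+k) -/
def Dfun (k : ℂ) (y : Vec2) (lam : ℂ) : M2 :=
  1 + (lam - k)⁻¹ • Bmat k y - (lam + k)⁻¹ • (sigma3 * Bmat k y * sigma3)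

/-- E(λ) = I + B†/(λ−k̄) − σ₃B†σ₃/(λ+k̄) -/
def Efun (k : ℂ) (y : Vec2) (lam : ℂ) : M2 :=
  1 + (lam - conj k)⁻¹ • (Bmat k y)ᴴ - (lam + conj k)⁻¹ • (sigma3 * (Bmat k y)ᴴ * sigma3)


lemma Bmat_eq (k : ℂ) (y : Vec2) :
    Bmat k y = ((k ^ 2 - (conj k) ^ 2) / 2) •
      !![alph k y * y 0 0 * conj (y 0 0), alph k y * y 0 0 * conj (y 1 0);
         conj (alph k y) * y 1 0 * conj (y 0 0), conj (alph k y) * y 1 0 * conj (y 1 0)] := by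
  ext i j
  fin_cases i <;> fin_cases j <;>
    simp [Bmat, zvec, Matrix.mul_apply, Matrix.vecMul, dotProduct, Fin.sum_univ_two,
      Matrix.conjTranspose_apply] <;> ring

lemma Efun_k (k : ℂ) (y : Vec2) (h1 : k - conj k ≠ 0) (h2 : k + conj k ≠ 0) :
    Efun k y k =
      !![1 - conj k * conj (alph k y) * (conj (y 0 0) * y 0 0),
         -(k * (alph k y * (y 0 0 * conj (y 1 0))));
         -(k * (conj (alph k y) * (y 1 0 * conj (y 0 0)))),
         1 - conj k * alph k y * (conj (y 1 0) * y 1 0)] := by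
  ext i j
  fin_cases i <;> fin_cases j <;>
    simp [Efun, Bmat_eq, sigma3, Matrix.mul_apply, Matrix.vecMul, dotProduct,
      Fin.sum_univ_two, Matrix.one_apply, Matrix.smul_apply, Matrix.conjTranspose_apply,
      map_add, _root_.map_mul, map_sub, map_div₀, map_pow, Complex.conj_conj, map_ofNat,
      Matrix.cons_val_zero, Matrix.cons_val_one, Matrix.head_cons, Matrix.head_fin_const,
      Matrix.cons_val', Matrix.empty_val', Matrix.cons_val_fin_one] <;>
    field_simp <;> ring

/-- σ₂·Bᵀ·σ₂ = ((k²−k̄²)/(2k))·E(k). -/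
theorem sigma2_B_transpose (k : ℂ) (hre : k.re ≠ 0) (him : k.im ≠ 0) (y : Vec2)
    (hy : k * (Complex.normSq (y 0 0) : ℂ) + conj k * (Complex.normSq (y 1 0) : ℂ) ≠ 0) :
    sigma2 * (Bmat k y)ᵀ * sigma2 = ((k ^ 2 - (conj k) ^ 2) / (2 * k)) • Efun k y k := by
  have hk : k ≠ 0 := fun h => hre (by simp [h])
  have h1 : k - conj k ≠ 0 := by
    rw [Complex.sub_conj]
    simp [him, Complex.I_ne_zero]
  have h2 : k + conj k ≠ 0 := by
    rw [Complex.add_conj]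
    exact_mod_cast mul_ne_zero two_ne_zero hre
  have hn0 : (Complex.normSq (y 0 0) : ℂ) = y 0 0 * conj (y 0 0) := (Complex.mul_conj _).symm
  have hn1 : (Complex.normSq (y 1 0) : ℂ) = y 1 0 * conj (y 1 0) := (Complex.mul_conj _).symm
  have hA : alph k y * (k * (y 0 0 * conj (y 0 0)) + conj k * (y 1 0 * conj (y 1 0))) = 1 := by
    rw [hn0, hn1] at hy
    rw [alph, hn0, hn1]
    exact inv_mul_cancel₀ hy
  have hB : conj (alph k y) * (conj k * (y 0 0 * conj (y 0 0)) + k * (y 1 0 * conj (y 1 0))) = 1 := by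
    have h := congrArg conj hA
    simp only [map_add, _root_.map_mul, _root_.map_one, Complex.conj_conj] at h
    linear_combination h
  ext i j
  fin_cases i <;> fin_cases j <;>
    simp [Bmat_eq, Efun_k k y h1 h2, sigma2, Matrix.mul_apply, Matrix.vecMul, dotProduct,
      Fin.sum_univ_two, Matrix.smul_apply, Matrix.transpose_apply,
      Matrix.cons_val_zero, Matrix.cons_val_one, Matrix.head_cons, Matrix.head_fin_const,
      Matrix.cons_val', Matrix.empty_val', Matrix.cons_val_fin_one, Matrix.vecHead, Matrix.vecTail]
  · field_simp
    linear_combination ((k ^ 2 - (conj k) ^ 2)) * hB +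
      (k * (conj k) ^ 2 * conj (alph k y) * y 1 0 * conj (y 1 0) -
        k ^ 3 * conj (alph k y) * y 1 0 * conj (y 1 0)) * Complex.I_sq
  · field_simp
    linear_combination ((k ^ 2 - (conj k) ^ 2) * alph k y * y 0 0 * conj (y 1 0)) *
      Complex.I_sq
  · field_simp
    linear_combination ((k ^ 2 - (conj k) ^ 2) * conj (alph k y) * y 1 0 * conj (y 0 0)) *
      Complex.I_sq
  · field_simp
    linear_combination ((k ^ 2 - (conj k) ^ 2)) * hA +
      (k * (conj k) ^ 2 * alph k y * y 0 0 * conj (y 0 0) -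
        k ^ 3 * alph k y * y 0 0 * conj (y 0 0)) * Complex.I_sq
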